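/- Let E be a Hilbert space, A ⊆ X index sets with E = ℓ²(X), and for a closed subspace L ⊆ E and disjoint finite subsets X₀, X₀' ⊆ X define L_{X₀,X₀'} := (L + E_{X₀'}) ∩ E_{X∖(X₀⊔X₀')}, where E_A is the closed span of basis vectors indexed by A. Then for any partition X₀' = X₁' ⊔ X₂', one has L_{∅,X₀'} = (L_{∅,X₁'})_{∅,X₂'}. -/

import Mathlib

noncomputable section

variable {X : Type*} [DecidableEq X]

/-- The canonical basis vector `e_x` of `ℓ²(X)`. -/
def basisVec (x : X) : lp (fun _ : X => ℂ) 2 := lp.single 2 x 1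

/-- `E_A`: the closed linear span of the basis vectors indexed by `A`. -/
def spanE (A : Set X) : Submodule ℂ (lp (fun _ : X => ℂ) 2) :=
  (Submodule.span ℂ (basisVec '' A)).topologicalClosure

/-- The `(X₀,X₀')`-reduction `L_{X₀,X₀'} = (L + E_{X₀'}) ∩ E_{X∖(X₀⊔X₀')}` of `L`. -/
def reduction (L : Submodule ℂ (lp (fun _ : X => ℂ) 2)) (X₀ X₀' : Set X) :
    Submodule ℂ (lp (fun _ : X => ℂ) 2) :=
  (L ⊔ spanE X₀') ⊓ spanE (X₀ ∪ X₀')ᶜ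

lemma eval_continuous (x : X) : Continuous (fun f : lp (fun _ : X => ℂ) 2 => f x) := by
  refine (LipschitzWith.of_dist_le_mul (K := 1) fun f g => ?_).continuous
  simp only [NNReal.coe_one, one_mul, dist_eq_norm]
  calc ‖f x - g x‖ = ‖(f - g) x‖ := by rw [lp.coeFn_sub]; rfl
    _ ≤ ‖f - g‖ := lp.norm_apply_le_norm two_ne_zero _ _

/-- The submodule of families vanishing outside `S`. -/
def vanish (S : Set X) : Submodule ℂ (lp (fun _ : X => ℂ) 2) where
  carrier := {f | ∀ x ∉ S, f x = 0}
  add_mem' := by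
    intro f g hf hg x hx
    have : (f + g) x = f x + g x := by rw [lp.coeFn_add]; rfl
    rw [this, hf x hx, hg x hx, add_zero]
  zero_mem' := by intro x hx; rfl
  smul_mem' := by
    intro c f hf x hx
    have : (c • f) x = c • f x := by rw [lp.coeFn_smul]; rfl
    rw [this, hf x hx, smul_zero]

lemma isClosed_vanish (S : Set X) : IsClosed (vanish S : Set (lp (fun _ : X => ℂ) 2)) := by
  have : (vanish S : Set (lp (fun _ : X => ℂ) 2)) =
      ⋂ x ∈ Sᶜ, (fun f : lp (fun _ : X => ℂ) 2 => f x) ⁻¹' {0} := by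
    ext f
    simp [vanish, Set.mem_iInter]; exact Iff.rfl
  rw [this]
  exact isClosed_biInter fun x _ => (isClosed_singleton).preimage (eval_continuous x)

lemma basisVec_apply (x y : X) : basisVec x y = if y = x then 1 else 0 := by
  by_cases h : y = x
  · subst h; simp [basisVec, lp.single_apply_self]
  · simp [basisVec, lp.single_apply_ne _ _ _ h, h]

lemma mem_spanE_iff (S : Set X) (f : lp (fun _ : X => ℂ) 2) :
    f ∈ spanE S ↔ ∀ x ∉ S, f x = 0 := by
  constructor
  · intro hf
    have hle : spanE S ≤ vanish S := by
      apply Submodule.topologicalClosure_minimal _ _ (isClosed_vanish S)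
      rw [Submodule.span_le]
      rintro _ ⟨x, hxS, rfl⟩ y hy
      rw [basisVec_apply]
      rw [if_neg]
      rintro rfl; exact hy hxS
    exact hle hf
  · intro h
    have hsum : HasSum (fun x : X => lp.single 2 x (f x)) f := lp.hasSum_single (by norm_num) f
    have hmem : ∀ x : X, lp.single 2 x (f x) ∈ spanE S := by
      intro x
      by_cases hx : x ∈ S
      · have : lp.single 2 x (f x) = f x • basisVec x := by
          rw [basisVec, ← lp.single_smul, smul_eq_mul, mul_one]
        rw [this]
        exact Submodule.smul_mem _ _ (Submodule.le_topologicalClosure _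
          (Submodule.subset_span ⟨x, hx, rfl⟩))
      · have h0 : lp.single 2 x (0 : ℂ) = (0 : lp (fun _ : X => ℂ) 2) := by
          refine lp.ext (funext fun j => ?_)
          by_cases hj : j = x
          · subst hj; exact lp.single_apply_self (E := fun _ : X => ℂ) 2 j 0
          · exact lp.single_apply_ne (E := fun _ : X => ℂ) 2 x 0 hj
        rw [h x hx, h0]
        exact Submodule.zero_mem _
    refine (Submodule.isClosed_topologicalClosure _).mem_of_tendsto hsum ?_
    filter_upwards with s
    exact Submodule.sum_mem _ fun x _ => hmem x

lemma spanE_mono {A B : Set X} (h : A ⊆ B) : spanE A ≤ spanE B :=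
  Submodule.topologicalClosure_mono (Submodule.span_mono (Set.image_mono h))

lemma spanE_finite_eq {S : Set X} (hS : S.Finite) :
    spanE S = Submodule.span ℂ (basisVec '' S) := by
  haveI : FiniteDimensional ℂ (Submodule.span ℂ (basisVec '' S)) :=
    FiniteDimensional.span_of_finite ℂ (hS.image _)
  exact (Submodule.closed_of_finiteDimensional _).submodule_topologicalClosure_eq

lemma spanE_union {A B : Set X} (hA : A.Finite) (hB : B.Finite) :
    spanE (A ∪ B) = spanE A ⊔ spanE B := by
  rw [spanE_finite_eq (hA.union hB), spanE_finite_eq hA, spanE_finite_eq hB,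
    Set.image_union, Submodule.span_union]

/-- For a partition `X₀' = X₁' ⊔ X₂'`, `L_{∅,X₀'} = (L_{∅,X₁'})_{∅,X₂'}`. -/
theorem stmt7 (L : Submodule ℂ (lp (fun _ : X => ℂ) 2))
    (hL : IsClosed (L : Set (lp (fun _ : X => ℂ) 2)))
    (X₀' X₁' X₂' : Set X) (hfin : X₀'.Finite)
    (hpart : X₀' = X₁' ∪ X₂') (hdisj : Disjoint X₁' X₂') :
    reduction L ∅ X₀' = reduction (reduction L ∅ X₁') ∅ X₂' := by
  subst hpart
  have h1 : X₁'.Finite := hfin.subset Set.subset_union_left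
  have h2 : X₂'.Finite := hfin.subset Set.subset_union_right
  simp only [reduction, Set.empty_union]
  apply le_antisymm
  · rintro x hx
    obtain ⟨hx1, hx2⟩ := Submodule.mem_inf.mp hx
    rw [spanE_union h1 h2, ← sup_assoc] at hx1
    obtain ⟨y, hy, v, hv, rfl⟩ := Submodule.mem_sup.mp hx1
    have hyv : ∀ z : X, (y + v) z = y z + v z := fun z => by rw [lp.coeFn_add]; rfl
    refine Submodule.mem_inf.mpr ⟨Submodule.mem_sup.mpr ⟨y, ?_, v, hv, rfl⟩, ?_⟩
    · refine Submodule.mem_inf.mpr ⟨hy, ?_⟩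
      rw [mem_spanE_iff]
      intro z hz
      rw [Set.notMem_compl_iff] at hz
      have hxz : (y + v) z = 0 :=
        (mem_spanE_iff _ _).mp hx2 z (by simp only [Set.mem_compl_iff, not_not]; exact Or.inl hz)
      have hvz : v z = 0 := (mem_spanE_iff _ _).mp hv z (Set.disjoint_left.mp hdisj hz)
      have := hyv z
      rw [hxz, hvz, add_zero] at this
      exact this.symm
    · rw [mem_spanE_iff] at hx2 ⊢
      intro z hz
      rw [Set.notMem_compl_iff] at hz
      exact hx2 z (by simp only [Set.mem_compl_iff, not_not]; exact Or.inr hz)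
  · rintro x hx
    obtain ⟨hx1, hx2⟩ := Submodule.mem_inf.mp hx
    obtain ⟨m, hm, v, hv, rfl⟩ := Submodule.mem_sup.mp hx1
    obtain ⟨hm1, hm2⟩ := Submodule.mem_inf.mp hm
    have hmv : ∀ z : X, (m + v) z = m z + v z := fun z => by rw [lp.coeFn_add]; rfl
    refine Submodule.mem_inf.mpr ⟨?_, ?_⟩
    · have hm' : m ∈ L ⊔ spanE (X₁' ∪ X₂') :=
        sup_le_sup_left (spanE_mono Set.subset_union_left) L hm1
      have hv' : v ∈ L ⊔ spanE (X₁' ∪ X₂') :=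
        Submodule.mem_sup_right (spanE_mono Set.subset_union_right hv)
      exact Submodule.add_mem _ hm' hv'
    · rw [mem_spanE_iff]
      intro z hz
      rw [Set.notMem_compl_iff] at hz
      rcases hz with hz1 | hz2
      · have hmz : m z = 0 := (mem_spanE_iff _ _).mp hm2 z (by simpa using hz1)
        have hvz : v z = 0 :=
          (mem_spanE_iff _ _).mp hv z (Set.disjoint_left.mp hdisj hz1)
        rw [hmv z, hmz, hvz, add_zero]
      · exact (mem_spanE_iff _ _).mp hx2 z (by simpa using hz2)

end
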